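/- For a point (a₀,a₁,a₂,a₃,a₄) ∈ ℂ⁵, every σ-invariant polynomial p ∈ ℂ[x₀,x₁,x₂,x₃,x₄] with zero constant term vanishes at (a₀,a₁,a₂,a₃,a₄) if and only if a₀ = 0, a₁ = 0 and a₂ = 0. -/

import Mathlib

open MvPolynomial

/-- The `ℂ`-algebra endomorphism of `ℂ[x₀,x₁,x₂,x₃,x₄]` given by `σ_t(x₀) = x₀`,
`σ_t(x₁) = x₁ + t·x₀`, `σ_t(x₂) = x₂ + 2t·x₁ + t²·x₀`,
`σ_t(x₃) = x₃ + 3t·x₂ + 3t²·x₁ + t³·x₀`,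
`σ_t(x₄) = x₄ + 4t·x₃ + 6t²·x₂ + 4t³·x₁ + t⁴·x₀` (the `ℂ⁺`-action on `Sym⁴(ℂ²)`). -/
noncomputable def sigma (t : ℂ) :
    MvPolynomial (Fin 5) ℂ →ₐ[ℂ] MvPolynomial (Fin 5) ℂ :=
  aeval ![X 0,
          X 1 + C t * X 0,
          X 2 + C (2 * t) * X 1 + C (t ^ 2) * X 0,
          X 3 + C (3 * t) * X 2 + C (3 * t ^ 2) * X 1 + C (t ^ 3) * X 0,
          X 4 + C (4 * t) * X 3 + C (6 * t ^ 2) * X 2 + C (4 * t ^ 3) * X 1 + C (t ^ 4) * X 0]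

/-- If `p` is `σ`-invariant, then `p` takes the same value at `b` and at the image of `b`
under the (point-level) action of `t`. -/
theorem sigma_key (p : MvPolynomial (Fin 5) ℂ) (hp : ∀ t : ℂ, sigma t p = p)
    (t : ℂ) (b : Fin 5 → ℂ) :
    eval ![b 0, b 1 + t * b 0, b 2 + 2*t*b 1 + t^2*b 0,
      b 3 + 3*t*b 2 + 3*t^2*b 1 + t^3*b 0,
      b 4 + 4*t*b 3 + 6*t^2*b 2 + 4*t^3*b 1 + t^4*b 0] p = eval b p := by
  have h1 : ∀ (f : Fin 5 → ℂ) (q : MvPolynomial (Fin 5) ℂ), aeval f q = eval f q := by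
    intro f q
    rw [aeval_def, eval]
    simp [eval₂Hom]
  have hv : (fun i => aeval b
      (![X 0, X 1 + C t * X 0, X 2 + C (2 * t) * X 1 + C (t ^ 2) * X 0,
          X 3 + C (3 * t) * X 2 + C (3 * t ^ 2) * X 1 + C (t ^ 3) * X 0,
          X 4 + C (4 * t) * X 3 + C (6 * t ^ 2) * X 2 + C (4 * t ^ 3) * X 1 + C (t ^ 4) * X 0] i))
      = ![b 0, b 1 + t * b 0, b 2 + 2*t*b 1 + t^2*b 0,
      b 3 + 3*t*b 2 + 3*t^2*b 1 + t^3*b 0,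
      b 4 + 4*t*b 3 + 6*t^2*b 2 + 4*t^3*b 1 + t^4*b 0] := by
    funext i
    fin_cases i <;> simp
  conv_rhs => rw [← hp t, sigma, ← h1, comp_aeval_apply, hv, h1]

/-- Every `σ`-invariant polynomial with zero constant term vanishes at
`(a₀,a₁,a₂,a₃,a₄) ∈ ℂ⁵` if and only if `a₀ = 0`, `a₁ = 0` and `a₂ = 0`. -/
theorem all_invariants_vanish_iff (a : Fin 5 → ℂ) :
    (∀ p : MvPolynomial (Fin 5) ℂ,
        (∀ t : ℂ, sigma t p = p) → constantCoeff p = 0 → eval a p = 0) ↔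
      (a 0 = 0 ∧ a 1 = 0 ∧ a 2 = 0) := by
  constructor
  · intro h
    have h0 : a 0 = 0 := by
      have := h (X 0) (fun t => by simp [sigma]) (by simp)
      simpa using this
    have hq : a 0 * a 2 - a 1 ^ 2 = 0 := by
      have := h (X 0 * X 2 - X 1 ^ 2)
        (fun t => by simp [sigma, C_mul, map_ofNat]; ring) (by simp)
      simpa using this
    have h1 : a 1 = 0 := by
      have : a 1 ^ 2 = 0 := by rw [h0] at hq; linear_combination -hq
      exact pow_eq_zero_iff (by norm_num) |>.mp this
    have h2 : a 2 = 0 := by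
      have hI : a 0 * a 4 - 4 * (a 1 * a 3) + 3 * a 2 ^ 2 = 0 := by
        have := h (X 0 * X 4 - C 4 * X 1 * X 3 + C 3 * X 2 ^ 2)
          (fun t => by simp [sigma, C_mul, map_ofNat]; ring) (by simp)
        simpa [mul_assoc] using this
      have : a 2 ^ 2 = 0 := by
        rw [h0, h1] at hI
        linear_combination hI / 3
      exact pow_eq_zero_iff (n := 2) (by norm_num) |>.mp this
    exact ⟨h0, h1, h2⟩
  · rintro ⟨h0, h1, h2⟩ p hp hc
    set c : ℂ → Fin 5 → ℂ :=
      fun s => ![0, a 3 * s ^ 2, -(2/3) * a 3 * s, a 4 / 4 * s, 0] with hcdef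
    set d : ℂ → Fin 5 → ℂ :=
      fun s => ![0, a 3 * s ^ 2, 4/3 * a 3 * s, a 3 + a 4 / 4 * s, a 4] with hddef
    have hs : ∀ s : ℂ, s ≠ 0 → eval (d s) p = eval (c s) p := by
      intro s hsne
      have hk := sigma_key p hp (1/s) (c s)
      rw [← hk]
      have hveq : d s = ![c s 0, c s 1 + 1/s * c s 0,
          c s 2 + 2*(1/s)*c s 1 + (1/s)^2*c s 0,
          c s 3 + 3*(1/s)*c s 2 + 3*(1/s)^2*c s 1 + (1/s)^3*c s 0,
          c s 4 + 4*(1/s)*c s 3 + 6*(1/s)^2*c s 2 + 4*(1/s)^3*c s 1 + (1/s)^4*c s 0] := by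
        funext i
        fin_cases i
        · simp [hcdef, hddef]
        · simp [hcdef, hddef]
        · simp [hcdef, hddef]; field_simp; ring
        · simp [hcdef, hddef]; field_simp; ring
        · simp [hcdef, hddef]; field_simp; ring_nf
      rw [hveq]
    have hcont : ∀ e : ℂ → Fin 5 → ℂ, (∀ i, Continuous fun s => e s i) →
        Continuous fun s : ℂ => eval (e s) p := by
      intro e he
      exact (MvPolynomial.continuous_eval p).comp (continuous_pi he)
    have hcc : Continuous fun s : ℂ => eval (c s) p := by
      apply hcont; intro i; fin_cases i <;> simp [hcdef] <;> fun_prop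
    have hdc : Continuous fun s : ℂ => eval (d s) p := by
      apply hcont; intro i; fin_cases i <;> simp [hddef] <;> fun_prop
    have heq : eval (d 0) p = eval (c 0) p := by
      have T1 : Filter.Tendsto (fun s : ℂ => eval (d s) p) (nhdsWithin 0 {0}ᶜ)
          (nhds (eval (d 0) p)) := hdc.continuousAt.tendsto.mono_left nhdsWithin_le_nhds
      have T2 : Filter.Tendsto (fun s : ℂ => eval (d s) p) (nhdsWithin 0 {0}ᶜ)
          (nhds (eval (c 0) p)) := by
        apply Filter.Tendsto.congr' _
          (hcc.continuousAt.tendsto.mono_left nhdsWithin_le_nhds)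
        filter_upwards [self_mem_nhdsWithin] with s hsne
        exact (hs s hsne).symm
      exact tendsto_nhds_unique T1 T2
    have hc0 : c 0 = (fun _ => 0) := by
      funext i; fin_cases i <;> simp [hcdef]
    have hd0 : d 0 = a := by
      funext i; fin_cases i <;> simp [hddef, h0, h1, h2]
    rw [hd0, hc0] at heq
    rw [heq, eval_zero', hc]
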